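/- Let (T, ε, δ) be a comonad on a category C, let (V, a : T.obj V ⟶ V) be a bifree algebra for the underlying endofunctor of T, let W be an object of C, and let t : T.obj W ⟶ V be the unique morphism satisfying t = δ_W ≫ T.map t ≫ a. Then for every object A, every morphism f : T.obj A ⟶ A, and every morphism u : V ⟶ A satisfying a ≫ u = T.map u ≫ f (i.e. u is a morphism of T-algebras from (V, a) to (A, f)), the composite t ≫ u : T.obj W ⟶ A satisfies δ_W ≫ T.map (t ≫ u) ≫ f = t ≫ u; in other words, t ≫ u is a fixed point of f in the co-Kleisli category of T. -/
import Mathlib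


open CategoryTheory CategoryTheory.Limits

/-- A bifree algebra for an endofunctor `T : C ⥤ C`: an algebra `(V, a)` that is initial
among `T`-algebras, whose structure map `a` is an isomorphism, and such that the coalgebra
`(V, a⁻¹)` is terminal among `T`-coalgebras. -/
def IsBifreeAlgebra {C : Type*} [Category C] (T : C ⥤ C) (V : C) (a : T.obj V ⟶ V) : Prop :=
  Nonempty (IsInitial (Endofunctor.Algebra.mk V a : Endofunctor.Algebra T)) ∧
  ∃ hiso : IsIso a,
    Nonempty (IsTerminal
      (Endofunctor.Coalgebra.mk V (@inv _ _ _ _ a hiso) : Endofunctor.Coalgebra T))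

/-- For a comonad `T`, a bifree algebra `(V, a)` of its underlying endofunctor, and the
(unique) fixed point `t : T.obj W ⟶ V` of `a` in the co-Kleisli category, composing `t` with
any algebra morphism `u : (V, a) ⟶ (A, f)` yields a fixed point of `f` in the co-Kleisli
category. -/
theorem fixedPoint_comp_algebraHom
    {C : Type*} [Category C] (T : Comonad C)
    (V : C) (a : (T : C ⥤ C).obj V ⟶ V)
    (h : IsBifreeAlgebra (T : C ⥤ C) V a)
    (W : C) (t : (T : C ⥤ C).obj W ⟶ V)
    (ht : t = T.δ.app W ≫ (T : C ⥤ C).map t ≫ a)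
    (A : C) (f : (T : C ⥤ C).obj A ⟶ A) (u : V ⟶ A)
    (hu : a ≫ u = (T : C ⥤ C).map u ≫ f) :
    T.δ.app W ≫ (T : C ⥤ C).map (t ≫ u) ≫ f = t ≫ u := by
  conv_rhs => rw [ht]
  simp only [Functor.map_comp, Category.assoc, ← hu]
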